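/- Let A be a Boolean algebra, B ≤ A a subalgebra, M an ideal of B, and N an ideal of A with N ∩ B ⊆ M. Then there is an ideal N' of A with N ⊆ N' and N' ∩ B = M; moreover, if M is a maximal ideal of B, then N' can be chosen to be a maximal ideal of A. -/
import Mathlib


variable {α : Type*}

/-- `B` is a Boolean subalgebra (as a subset) of the Boolean algebra `α`. -/
structure IsBooleanSubalgebra [BooleanAlgebra α] (B : Set α) : Prop where
  bot_mem : ⊥ ∈ B
  top_mem : ⊤ ∈ B
  sup_mem : ∀ {x y}, x ∈ B → y ∈ B → x ⊔ y ∈ B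
  inf_mem : ∀ {x y}, x ∈ B → y ∈ B → x ⊓ y ∈ B
  compl_mem : ∀ {x}, x ∈ B → xᶜ ∈ B

/-- `M` is an ideal of the subalgebra (subset) `B`: nonempty, downward closed
within `B`, and closed under joins. -/
structure IsIdealOn [BooleanAlgebra α] (B M : Set α) : Prop where
  subset : M ⊆ B
  nonempty : M.Nonempty
  lower : ∀ {x y}, y ∈ M → x ∈ B → x ≤ y → x ∈ M
  sup_mem : ∀ {x y}, x ∈ M → y ∈ M → x ⊔ y ∈ M

/-- The ideal of the whole algebra `α` generated by a subset `X`. -/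
def idealGen [BooleanAlgebra α] (X : Set α) : Set α :=
  ⋂₀ {I | IsIdealOn Set.univ I ∧ X ⊆ I}

/-- `M` is a maximal ideal of the subalgebra `B`: a proper ideal of `B` such that
any ideal of `B` strictly containing it is all of `B`. -/
def IsMaximalIdealOn [BooleanAlgebra α] (B M : Set α) : Prop :=
  IsIdealOn B M ∧ M ≠ B ∧ ∀ M', IsIdealOn B M' → M ⊂ M' → M' = B

/-- Given an ideal `M` of a subalgebra `B` and an ideal `N` of `α`
with `N ∩ B ⊆ M`, there is an ideal `N'` of `α` with `N ⊆ N'` and `N' ∩ B = M`;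
moreover if `M` is maximal in `B` then `N'` can be chosen maximal in `α`. -/
theorem ideal_extension [BooleanAlgebra α] (B : Set α)
    (hB : IsBooleanSubalgebra B) (M : Set α) (hM : IsIdealOn B M)
    (N : Set α) (hN : IsIdealOn Set.univ N) (hNB : N ∩ B ⊆ M) :
    (∃ N', IsIdealOn Set.univ N' ∧ N ⊆ N' ∧ N' ∩ B = M) ∧
    (IsMaximalIdealOn B M →
      ∃ N', IsMaximalIdealOn Set.univ N' ∧ N ⊆ N' ∧ N' ∩ B = M) := by
  -- the extension ideal
  set N' : Set α := {x | ∃ n ∈ N, ∃ m ∈ M, x ≤ n ⊔ m} with hN'def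
  obtain ⟨n₀, hn₀⟩ := hN.nonempty
  obtain ⟨m₀, hm₀⟩ := hM.nonempty
  have hN'ideal : IsIdealOn Set.univ N' := by
    refine ⟨Set.subset_univ _, ⟨n₀ ⊔ m₀, n₀, hn₀, m₀, hm₀, le_rfl⟩, ?_, ?_⟩
    · rintro x y ⟨n, hn, m, hm, hy⟩ - hxy
      exact ⟨n, hn, m, hm, hxy.trans hy⟩
    · rintro x y ⟨n, hn, m, hm, hx⟩ ⟨n', hn', m', hm', hy⟩
      refine ⟨n ⊔ n', hN.sup_mem hn hn', m ⊔ m', hM.sup_mem hm hm', ?_⟩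
      calc x ⊔ y ≤ (n ⊔ m) ⊔ (n' ⊔ m') := sup_le_sup hx hy
        _ = (n ⊔ n') ⊔ (m ⊔ m') := sup_sup_sup_comm n m n' m'
  have hNN' : N ⊆ N' := fun x hx => ⟨x, hx, m₀, hm₀, le_sup_left⟩
  have hMN' : M ⊆ N' := fun x hx => ⟨n₀, hn₀, x, hx, le_sup_right⟩
  have hcap : N' ∩ B = M := by
    apply Set.Subset.antisymm
    · rintro b ⟨⟨n, hn, m, hm, hb⟩, hbB⟩
      have h1 : b ⊓ mᶜ ∈ N := by
        refine hN.lower hn trivial ?_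
        calc b ⊓ mᶜ ≤ (n ⊔ m) ⊓ mᶜ := inf_le_inf_right _ hb
          _ ≤ n := by
            rw [inf_sup_right]
            simp
      have h2 : b ⊓ mᶜ ∈ B := hB.inf_mem hbB (hB.compl_mem (hM.subset hm))
      have h3 : b ⊓ mᶜ ∈ M := hNB ⟨h1, h2⟩
      have h4 : (b ⊓ mᶜ) ⊔ m ∈ M := hM.sup_mem h3 hm
      refine hM.lower h4 hbB ?_
      calc b = (b ⊓ mᶜ) ⊔ (b ⊓ m) := by rw [← inf_sup_left]; simp
        _ ≤ (b ⊓ mᶜ) ⊔ m := sup_le_sup_left inf_le_right _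
    · exact fun m hm => ⟨hMN' hm, hM.subset hm⟩
  constructor
  · exact ⟨N', hN'ideal, hNN', hcap⟩
  · rintro ⟨hMi, hMne, hMmax⟩
    -- Zorn
    set S : Set (Set α) := {I | IsIdealOn Set.univ I ∧ I ∩ B = M} with hSdef
    have hchain : ∀ c ⊆ S, IsChain (· ⊆ ·) c → c.Nonempty →
        ∃ ub ∈ S, ∀ s ∈ c, s ⊆ ub := by
      rintro c hcS hc ⟨I₀, hI₀⟩
      refine ⟨⋃₀ c, ⟨⟨Set.subset_univ _, ?_, ?_, ?_⟩, ?_⟩,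
        fun s hs => Set.subset_sUnion_of_mem hs⟩
      · obtain ⟨x, hx⟩ := (hcS hI₀).1.nonempty
        exact ⟨x, I₀, hI₀, hx⟩
      · rintro x y ⟨I, hI, hyI⟩ - hxy
        exact ⟨I, hI, (hcS hI).1.lower hyI trivial hxy⟩
      · rintro x y ⟨I, hI, hxI⟩ ⟨J, hJ, hyJ⟩
        rcases hc.total hI hJ with h | h
        · exact ⟨J, hJ, (hcS hJ).1.sup_mem (h hxI) hyJ⟩
        · exact ⟨I, hI, (hcS hI).1.sup_mem hxI (h hyJ)⟩
      · apply Set.Subset.antisymm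
        · rintro x ⟨⟨I, hI, hxI⟩, hxB⟩
          rw [← (hcS hI).2]
          exact ⟨hxI, hxB⟩
        · intro m hm
          refine ⟨⟨I₀, hI₀, ?_⟩, hM.subset hm⟩
          rw [← (hcS hI₀).2] at hm
          exact hm.1
    obtain ⟨K, hN'K, hKS, hKmax⟩ := zorn_subset_nonempty S hchain N' ⟨hN'ideal, hcap⟩
    have hKideal := hKS.1
    have hKB : K ∩ B = M := hKS.2
    have htopM : ⊤ ∉ M := by
      intro h
      exact hMne (Set.Subset.antisymm hM.subset fun b hb => hM.lower h hb le_top)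
    refine ⟨K, ⟨hKideal, ?_, ?_⟩, hNN'.trans hN'K, hKB⟩
    · intro h
      apply htopM
      rw [← hKB, h]
      exact ⟨trivial, hB.top_mem⟩
    · intro J hJ hKJ
      have hJB : IsIdealOn B (J ∩ B) := by
        refine ⟨Set.inter_subset_right, ⟨⊥, ?_, hB.bot_mem⟩, ?_, ?_⟩
        · obtain ⟨x, hx⟩ := hJ.nonempty
          exact hJ.lower hx trivial bot_le
        · rintro x y ⟨hyJ, -⟩ hxB hxy
          exact ⟨hJ.lower hyJ trivial hxy, hxB⟩
        · rintro x y ⟨hxJ, hxB⟩ ⟨hyJ, hyB⟩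
          exact ⟨hJ.sup_mem hxJ hyJ, hB.sup_mem hxB hyB⟩
      have hMJB : M ⊆ J ∩ B := by
        rw [← hKB]; exact Set.inter_subset_inter_left _ hKJ.1
      rcases eq_or_ne (J ∩ B) M with h | h
      · exact absurd (hKmax ⟨hJ, h⟩ hKJ.1) hKJ.2
      · have hJBeqB : J ∩ B = B := hMmax _ hJB ⟨hMJB, fun hc => h (Set.Subset.antisymm hc hMJB)⟩
        have htopJ : ⊤ ∈ J := by
          have : (⊤ : α) ∈ J ∩ B := by rw [hJBeqB]; exact hB.top_mem
          exact this.1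
        exact Set.eq_univ_of_forall fun x => hJ.lower htopJ trivial le_top
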